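/- Let C₀ > 0 and let f : ℝ² → [0,∞) be measurable with f(p) ≤ C₀ for almost every p. Let ξ ∈ ℝ² with |ξ| ≤ 1. Then there is a constant C, depending only on C₀, such that ∫_{ℝ²} f(p)/(p_0 (1 + p̂·ξ)) dp ≤ C (∫_{ℝ²} p_0⁴ f(p) dp)^{2/5}. -/

import Mathlib

open MeasureTheory
open scoped NNReal RealInnerProductSpace

/-- `p₀ = √(1 + |p|²)` for `p ∈ ℝ²`. -/
noncomputable def pZero (p : EuclideanSpace ℝ (Fin 2)) : ℝ := Real.sqrt (1 + ‖p‖ ^ 2)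

/-- `p̂ = p / p₀` for `p ∈ ℝ²`. -/
noncomputable def pHat (p : EuclideanSpace ℝ (Fin 2)) : EuclideanSpace ℝ (Fin 2) :=
  (pZero p)⁻¹ • p

open Real
open scoped ENNReal

local notation "E2" => EuclideanSpace ℝ (Fin 2)

lemma inner_coords (p q : E2) : ⟪p, q⟫ = p 0 * q 0 + p 1 * q 1 := by
  simp [PiLp.inner_apply, Fin.sum_univ_two, RCLike.inner_apply, conj_trivial]; ring

lemma norm_sq_coords (p : E2) : ‖p‖^2 = p 0^2 + p 1^2 := by
  rw [← real_inner_self_eq_norm_sq, inner_coords]; ring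

lemma key_ineq (ξ η p : E2) (hξ : ‖ξ‖ ≤ 1) (hη : ‖η‖ = 1) (hperp : ⟪η, ξ⟫ = 0) :
    ⟪p, ξ⟫^2 + ⟪η, p⟫^2 ≤ ‖p‖^2 := by
  have h3 : ξ 0^2 + ξ 1^2 ≤ 1 := by
    have h := norm_sq_coords ξ
    nlinarith [(pow_le_one₀ (norm_nonneg ξ) hξ : ‖ξ‖^2 ≤ 1)]
  have h2 : η 0^2 + η 1^2 = 1 := by
    have h := norm_sq_coords η; rw [hη] at h; linarith
  have h1 : η 0 * ξ 0 + η 1 * ξ 1 = 0 := by rw [← inner_coords]; exact hperp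
  rw [inner_coords, inner_coords, norm_sq_coords]
  set a := ξ 0; set b := ξ 1; set u := η 0; set v := η 1; set x := p 0; set y := p 1
  have hc : a*x + b*y = (b*u - a*v) * (u*y - v*x) := by
    linear_combination (u*x+v*y)*h1 - (a*x+b*y)*h2
  have h4 : (b*u - a*v)^2 = a^2 + b^2 := by
    linear_combination (-(a*u+b*v))*h1 + (a^2+b^2)*h2
  have e1 : x*a + y*b = a*x + b*y := by ring
  calc (x*a + y*b)^2 + (u*x + v*y)^2
      = (b*u - a*v)^2 * (u*y - v*x)^2 + (u*x + v*y)^2 := by rw [e1, hc]; ring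
    _ = (a^2 + b^2) * (u*y - v*x)^2 + (u*x + v*y)^2 := by rw [h4]
    _ ≤ 1 * (u*y - v*x)^2 + (u*x + v*y)^2 := by nlinarith [sq_nonneg (u*y - v*x)]
    _ = x^2 + y^2 := by linear_combination (x^2+y^2)*h2

noncomputable def perp (η : E2) : E2 := (WithLp.equiv 2 (Fin 2 → ℝ)).symm ![η 1, -η 0]

lemma perp_coords (η : E2) : perp η 0 = η 1 ∧ perp η 1 = -η 0 := by
  constructor <;> simp [perp]

lemma norm_perp (η : E2) : ‖perp η‖ = ‖η‖ := by
  have h1 := norm_sq_coords (perp η)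
  have h2 := norm_sq_coords η
  rw [(perp_coords η).1, (perp_coords η).2] at h1
  nlinarith [norm_nonneg (perp η), norm_nonneg η]

lemma inner_perp (η : E2) : ⟪perp η, η⟫ = 0 := by
  rw [inner_coords, (perp_coords η).1, (perp_coords η).2]; ring

lemma exists_eta (ξ : E2) : ∃ η : E2, ‖η‖ = 1 ∧ ⟪η, ξ⟫ = 0 := by
  by_cases h : ξ = 0
  · refine ⟨EuclideanSpace.single 0 1, ?_, by simp [h]⟩
    simp [EuclideanSpace.norm_single]
  · refine ⟨‖ξ‖⁻¹ • perp ξ, ?_, ?_⟩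
    · rw [norm_smul, norm_perp]
      simp [norm_ne_zero_iff.mpr h, abs_of_nonneg (inv_nonneg.mpr (norm_nonneg ξ))]
    · rw [real_inner_smul_left, inner_coords, (perp_coords ξ).1, (perp_coords ξ).2]
      ring

lemma pZero_nonneg (p : E2) : 0 ≤ pZero p := Real.sqrt_nonneg _

lemma pZero_sq (p : E2) : pZero p ^ 2 = 1 + ‖p‖^2 :=
  Real.sq_sqrt (by positivity)

lemma pZero_one_le (p : E2) : 1 ≤ pZero p := by
  have h := Real.sqrt_le_sqrt (show (1:ℝ) ≤ 1 + ‖p‖^2 by nlinarith [sq_nonneg ‖p‖])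
  rwa [Real.sqrt_one] at h

lemma pZero_pos (p : E2) : 0 < pZero p := lt_of_lt_of_le one_pos (pZero_one_le p)

lemma norm_le_pZero (p : E2) : ‖p‖ ≤ pZero p := by
  nlinarith [pZero_sq p, pZero_pos p, norm_nonneg p]

lemma denom_eq (p ξ : E2) : pZero p * (1 + ⟪pHat p, ξ⟫) = pZero p + ⟪p, ξ⟫ := by
  have h := (pZero_pos p).ne'
  rw [pHat, real_inner_smul_left]
  field_simp

lemma pZero_measurable : Measurable pZero :=
  (Real.continuous_sqrt.comp (continuous_const.add ((continuous_norm).pow 2))).measurable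

lemma denom_lower (p ξ η : E2) (hkey : ⟪p, ξ⟫^2 + ⟪η, p⟫^2 ≤ ‖p‖^2) :
    1 + ⟪η, p⟫^2 ≤ 2 * pZero p * (pZero p + ⟪p, ξ⟫) := by
  nlinarith [pZero_sq p, sq_nonneg (pZero p + ⟪p, ξ⟫), pZero_pos p]

lemma denom_pos (p ξ η : E2) (hkey : ⟪p, ξ⟫^2 + ⟪η, p⟫^2 ≤ ‖p‖^2) :
    0 < pZero p + ⟪p, ξ⟫ := by
  nlinarith [denom_lower p ξ η hkey, pZero_pos p, sq_nonneg ⟪η, p⟫]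

noncomputable def onb (v : Fin 2 → E2) (hv : Orthonormal ℝ v) :
    OrthonormalBasis (Fin 2) ℝ E2 :=
  (basisOfOrthonormalOfCardEqFinrank hv (by simp [finrank_euclideanSpace_fin])).toOrthonormalBasis
    (by rwa [coe_basisOfOrthonormalOfCardEqFinrank])

lemma onb_repr (v : Fin 2 → E2) (hv : Orthonormal ℝ v) (p : E2) (i : Fin 2) :
    (onb v hv).repr p i = ⟪v i, p⟫ := by
  rw [OrthonormalBasis.repr_apply_apply]
  congr 1
  simp [onb]

lemma lint_strip (R c : ℝ) (hc : 0 ≤ c) :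
    ∫⁻ q : EuclideanSpace ℝ (Fin 2),
      ({t : ℝ | |t| ≤ R}.indicator (fun _ => (1:ℝ≥0∞)) (q 0)) * ENNReal.ofReal (c * (1 + (q 1)^2)⁻¹)
      = ENNReal.ofReal (2*R) * (ENNReal.ofReal c * ENNReal.ofReal π) := by
  have hs : {t : ℝ | |t| ≤ R} = Set.Icc (-R) R := by ext t; simp [abs_le]
  have hmeas : Measurable fun s : ℝ => ENNReal.ofReal (c * (1 + s^2)⁻¹) :=
    (((measurable_const.add (measurable_id.pow_const 2)).inv).const_mul c).ennreal_ofReal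
  have hind : Measurable fun t : ℝ => (Set.Icc (-R) R).indicator (fun _ => (1:ℝ≥0∞)) t :=
    measurable_const.indicator measurableSet_Icc
  have h1 : (∫⁻ t : ℝ, (Set.Icc (-R) R).indicator (fun _ => (1:ℝ≥0∞)) t) = ENNReal.ofReal (2*R) := by
    rw [lintegral_indicator measurableSet_Icc]
    simp only [setLIntegral_one, Real.volume_Icc]
    congr 1; ring
  have h2 : (∫⁻ s : ℝ, ENNReal.ofReal (c * (1 + s^2)⁻¹)) = ENNReal.ofReal c * ENNReal.ofReal π := by
    simp_rw [ENNReal.ofReal_mul hc]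
    rw [lintegral_const_mul' _ _ ENNReal.ofReal_ne_top]
    congr 1
    rw [← integral_univ_inv_one_add_sq]
    exact (ofReal_integral_eq_lintegral_ofReal integrable_inv_one_add_sq
      (ae_of_all _ fun x => by positivity)).symm
  simp only [hs]
  calc ∫⁻ q : EuclideanSpace ℝ (Fin 2),
      ((Set.Icc (-R) R).indicator (fun _ => (1:ℝ≥0∞)) (q 0)) * ENNReal.ofReal (c * (1 + (q 1)^2)⁻¹)
      = ∫⁻ x : Fin 2 → ℝ,
        ((Set.Icc (-R) R).indicator (fun _ => (1:ℝ≥0∞)) (x 0)) * ENNReal.ofReal (c * (1 + (x 1)^2)⁻¹) :=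
        (EuclideanSpace.volume_preserving_symm_measurableEquiv_toLp (Fin 2)).lintegral_comp_emb
          (MeasurableEquiv.toLp 2 (Fin 2 → ℝ)).symm.measurableEmbedding
          (fun x => ((Set.Icc (-R) R).indicator (fun _ => (1:ℝ≥0∞)) (x 0)) * ENNReal.ofReal (c * (1 + (x 1)^2)⁻¹))
    _ = ∫⁻ y : ℝ × ℝ,
        ((Set.Icc (-R) R).indicator (fun _ => (1:ℝ≥0∞)) y.1) * ENNReal.ofReal (c * (1 + y.2^2)⁻¹) :=
        ((((volume_preserving_finTwoArrow ℝ).symm MeasurableEquiv.finTwoArrow).lintegral_comp_emb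
          MeasurableEquiv.finTwoArrow.symm.measurableEmbedding
          (fun x => ((Set.Icc (-R) R).indicator (fun _ => (1:ℝ≥0∞)) (x 0)) * ENNReal.ofReal (c * (1 + (x 1)^2)⁻¹)))).symm
    _ = ENNReal.ofReal (2*R) * (ENNReal.ofReal c * ENNReal.ofReal π) := by
        rw [MeasureTheory.Measure.volume_eq_prod,
          lintegral_prod_mul hind.aemeasurable hmeas.aemeasurable, h1, h2]

/-- **Momentum-singularity estimate, second form** (Lemma 5.2, estimate (5.2)).
For `f : ℝ² → [0,∞)` measurable with `f ≤ C₀` a.e. and `|ξ| ≤ 1`, there is a constant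
`C = C(C₀)` with `∫ f(p)/(p₀(1+p̂·ξ)) dp ≤ C (∫ p₀⁴ f dp)^{2/5}`. -/
theorem singularity_estimate_two (C₀ : ℝ) (hC₀ : 0 < C₀) :
    ∃ C : ℝ≥0, 0 < C ∧
      ∀ (f : EuclideanSpace ℝ (Fin 2) → ℝ),
        Measurable f → (∀ p, 0 ≤ f p) →
        (∀ᵐ p : EuclideanSpace ℝ (Fin 2), f p ≤ C₀) →
        ∀ (ξ : EuclideanSpace ℝ (Fin 2)), ‖ξ‖ ≤ 1 →
          (∫⁻ p, ENNReal.ofReal (f p / (pZero p * (1 + ⟪pHat p, ξ⟫))))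
            ≤ C * (∫⁻ p, ENNReal.ofReal (pZero p ^ 4 * f p)) ^ ((2 : ℝ) / 5) := by
  refine ⟨Real.toNNReal (8 * π * C₀ + 2), ?_, ?_⟩
  · rw [Real.toNNReal_pos]; positivity
  intro f hf hf0 hbd ξ hξ
  obtain ⟨η, hη1, hηξ⟩ := exists_eta ξ
  have hkey : ∀ p : E2, ⟪p, ξ⟫^2 + ⟪η, p⟫^2 ≤ ‖p‖^2 := fun p => key_ineq ξ η p hξ hη1 hηξ
  have hDpos : ∀ p : E2, 0 < pZero p + ⟪p, ξ⟫ := fun p => denom_pos p ξ η (hkey p)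
  simp only [denom_eq]
  set I := ∫⁻ p : E2, ENNReal.ofReal (pZero p ^ 4 * f p) with hIdef
  clear_value I
  have hCcoe : ((Real.toNNReal (8 * π * C₀ + 2) : ℝ≥0) : ℝ≥0∞)
      = ENNReal.ofReal (8 * π * C₀) + 2 := by
    rw [show ((Real.toNNReal (8 * π * C₀ + 2) : ℝ≥0) : ℝ≥0∞) = ENNReal.ofReal (8 * π * C₀ + 2) from rfl,
      ENNReal.ofReal_add (by positivity) (by norm_num), ENNReal.ofReal_ofNat]
  -- global pointwise bound
  have hglob : ∀ p : E2, f p / (pZero p + ⟪p, ξ⟫) ≤ 2 * (pZero p ^ 4 * f p) := by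
    intro p
    rw [div_le_iff₀ (hDpos p)]
    have h1 : 1 ≤ 2 * pZero p * (pZero p + ⟪p, ξ⟫) :=
      le_trans (by nlinarith [sq_nonneg ⟪η, p⟫]) (denom_lower p ξ η (hkey p))
    have h2 : f p ≤ f p * (2 * pZero p * (pZero p + ⟪p, ξ⟫)) :=
      le_mul_of_one_le_right (hf0 p) h1
    have hcube : (1:ℝ) ≤ pZero p ^ 3 := one_le_pow₀ (pZero_one_le p)
    have h3 : f p * (2 * pZero p * (pZero p + ⟪p, ξ⟫))
        ≤ f p * (2 * pZero p * (pZero p + ⟪p, ξ⟫)) * pZero p ^ 3 :=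
      le_mul_of_one_le_right (mul_nonneg (hf0 p) (le_trans zero_le_one h1)) hcube
    have e : f p * (2 * pZero p * (pZero p + ⟪p, ξ⟫)) * pZero p ^ 3
        = 2 * (pZero p ^ 4 * f p) * (pZero p + ⟪p, ξ⟫) := by ring
    linarith
  by_cases hI1 : I ≤ 1
  · -- small case
    have hpt : ∀ p : E2, ENNReal.ofReal (f p / (pZero p + ⟪p, ξ⟫))
        ≤ 2 * ENNReal.ofReal (pZero p ^ 4 * f p) := by
      intro p
      calc ENNReal.ofReal (f p / (pZero p + ⟪p, ξ⟫))
          ≤ ENNReal.ofReal (2 * (pZero p ^ 4 * f p)) := ENNReal.ofReal_le_ofReal (hglob p)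
        _ = 2 * ENNReal.ofReal (pZero p ^ 4 * f p) := by
            rw [ENNReal.ofReal_mul (by norm_num), ENNReal.ofReal_ofNat]
    calc (∫⁻ p : E2, ENNReal.ofReal (f p / (pZero p + ⟪p, ξ⟫)))
        ≤ ∫⁻ p : E2, 2 * ENNReal.ofReal (pZero p ^ 4 * f p) := lintegral_mono hpt
      _ = 2 * I := by rw [hIdef]; exact lintegral_const_mul' _ _ (by simp)
      _ ≤ 2 * I ^ ((2:ℝ)/5) := by
          gcongr
          conv_lhs => rw [← ENNReal.rpow_one I]
          exact ENNReal.rpow_le_rpow_of_exponent_ge hI1 (by norm_num)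
      _ ≤ ↑(Real.toNNReal (8 * π * C₀ + 2)) * I ^ ((2:ℝ)/5) := by
          gcongr
          rw [hCcoe]
          exact le_add_self
  · push_neg at hI1
    by_cases hItop : I = ⊤
    · rw [hItop, ENNReal.top_rpow_of_pos (by norm_num), ENNReal.mul_top]
      · exact le_top
      · simp only [ne_eq, ENNReal.coe_eq_zero, Real.toNNReal_eq_zero, not_le]
        positivity
    -- main case : 1 < I < ⊤
    have hIt1 : 1 ≤ I.toReal := by
      rw [← ENNReal.toReal_one]
      exact ENNReal.toReal_mono hItop hI1.le
    set R : ℝ := I.toReal ^ ((1:ℝ)/5) with hRdef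
    have hR1 : 1 ≤ R := Real.one_le_rpow hIt1 (by norm_num)
    have hR0 : 0 < R := lt_of_lt_of_le one_pos hR1
    have hRpow : ∀ n : ℕ, R ^ n = I.toReal ^ ((n:ℝ)/5) := by
      intro n
      rw [hRdef, ← Real.rpow_natCast (I.toReal ^ ((1:ℝ)/5)) n, ← Real.rpow_mul ENNReal.toReal_nonneg]
      congr 1
      ring
    have hofRpow : ∀ n : ℕ, ENNReal.ofReal (R ^ n) = I ^ ((n:ℝ)/5) := by
      intro n
      rw [hRpow n, ENNReal.toReal_rpow, ENNReal.ofReal_toReal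
        (ENNReal.rpow_ne_top_of_nonneg (by positivity) hItop)]
    clear hRdef
    clear_value R
    set S : Set E2 := {p : E2 | ‖p‖ ≤ R} with hSdef
    have hS : MeasurableSet S := (isClosed_le continuous_norm continuous_const).measurableSet
    have hinnerm : Measurable fun p : E2 => ⟪η, p⟫ :=
      (continuous_const.inner continuous_id).measurable
    set K : ℝ := 2 * C₀ * (1 + R) with hKdef
    have hK0 : 0 ≤ K := by positivity
    set G1 : E2 → ℝ≥0∞ := S.indicator (fun p => ENNReal.ofReal (K * (1 + ⟪η, p⟫^2)⁻¹)) with hG1def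
    set G2 : E2 → ℝ≥0∞ :=
      Sᶜ.indicator (fun p => ENNReal.ofReal ((2 / R^3) * (pZero p ^ 4 * f p))) with hG2def
    have hG1m : Measurable G1 :=
      (((measurable_const.add (hinnerm.pow_const 2)).inv.const_mul K).ennreal_ofReal).indicator hS
    -- a.e. pointwise decomposition
    have hae : ∀ᵐ p : E2, ENNReal.ofReal (f p / (pZero p + ⟪p, ξ⟫)) ≤ G1 p + G2 p := by
      filter_upwards [hbd] with p hbp
      by_cases hp : p ∈ S
      · rw [hG1def, hG2def, Set.indicator_of_mem hp, Set.indicator_of_notMem (by simpa using hp),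
          add_zero]
        apply ENNReal.ofReal_le_ofReal
        have hs1 : (0:ℝ) < 1 + ⟪η, p⟫^2 := by positivity
        rw [← div_eq_mul_inv, div_le_div_iff₀ (hDpos p) hs1]
        have hp0R : pZero p ≤ 1 + R := by
          have hnR : ‖p‖ ≤ R := hp
          nlinarith [pZero_sq p, pZero_nonneg p, norm_nonneg p]
        have t1 : f p * (1 + ⟪η, p⟫^2) ≤ C₀ * (1 + ⟪η, p⟫^2) :=
          mul_le_mul_of_nonneg_right hbp (by positivity)
        have t2 : C₀ * (1 + ⟪η, p⟫^2) ≤ C₀ * (2 * pZero p * (pZero p + ⟪p, ξ⟫)) :=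
          mul_le_mul_of_nonneg_left (denom_lower p ξ η (hkey p)) hC₀.le
        have t3 : C₀ * (2 * pZero p * (pZero p + ⟪p, ξ⟫)) ≤ K * (pZero p + ⟪p, ξ⟫) := by
          rw [hKdef]
          nlinarith [mul_nonneg (mul_nonneg hC₀.le (hDpos p).le) (sub_nonneg.mpr hp0R)]
        linarith
      · rw [hG1def, hG2def, Set.indicator_of_notMem hp, Set.indicator_of_mem (by simpa using hp),
          zero_add]
        apply ENNReal.ofReal_le_ofReal
        have hpR : R ≤ ‖p‖ := le_of_not_ge hp
        have hRp0 : R ≤ pZero p := le_trans hpR (norm_le_pZero p)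
        have h1 : 1 ≤ 2 * pZero p * (pZero p + ⟪p, ξ⟫) :=
          le_trans (by nlinarith [sq_nonneg ⟪η, p⟫]) (denom_lower p ξ η (hkey p))
        have h2 : R ^ 3 ≤ pZero p ^ 3 := pow_le_pow_left₀ hR0.le hRp0 3
        rw [div_le_iff₀ (hDpos p)]
        have key : (2 / R^3) * (pZero p ^ 4 * f p) * (pZero p + ⟪p, ξ⟫)
            = (f p * (2 * pZero p * (pZero p + ⟪p, ξ⟫))) * (pZero p ^ 3 / R ^ 3) := by
          field_simp
        rw [key]
        have hq1 : (1:ℝ) ≤ pZero p ^ 3 / R ^ 3 := (one_le_div (by positivity)).mpr h2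
        nlinarith [mul_le_mul_of_nonneg_left h1 (hf0 p),
          mul_nonneg (hf0 p) (le_trans zero_le_one h1 : (0:ℝ) ≤ 2 * pZero p * (pZero p + ⟪p, ξ⟫)),
          mul_le_mul_of_nonneg_left hq1
            (mul_nonneg (hf0 p) (le_trans zero_le_one h1 : (0:ℝ) ≤ 2 * pZero p * (pZero p + ⟪p, ξ⟫)))]
      -- end a.e.
    have step1 : (∫⁻ p : E2, ENNReal.ofReal (f p / (pZero p + ⟪p, ξ⟫)))
        ≤ (∫⁻ p : E2, G1 p) + ∫⁻ p : E2, G2 p := by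
      calc (∫⁻ p : E2, ENNReal.ofReal (f p / (pZero p + ⟪p, ξ⟫)))
          ≤ ∫⁻ p : E2, (G1 p + G2 p) := lintegral_mono_ae hae
        _ = (∫⁻ p : E2, G1 p) + ∫⁻ p : E2, G2 p := lintegral_add_left hG1m _
    -- bound on G1 integral
    have hG1int : (∫⁻ p : E2, G1 p)
        ≤ ENNReal.ofReal (2*R) * (ENNReal.ofReal K * ENNReal.ofReal π) := by
      have o00 : ⟪perp η, perp η⟫ = 1 := by
        rw [real_inner_self_eq_norm_sq, norm_perp, hη1]; norm_num
      have o11 : ⟪η, η⟫ = 1 := by rw [real_inner_self_eq_norm_sq, hη1]; norm_num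
      have o01 : ⟪perp η, η⟫ = 0 := inner_perp η
      have o10 : ⟪η, perp η⟫ = 0 := by rw [real_inner_comm]; exact inner_perp η
      have hv : Orthonormal ℝ ![perp η, η] := by
        have h2 : η 0 ^ 2 + η 1 ^ 2 = 1 := by
          have h := norm_sq_coords η; rw [hη1] at h; linarith
        rw [orthonormal_iff_ite]
        simp [Fin.forall_fin_two, (perp_coords η).1, (perp_coords η).2]
        refine ⟨⟨Or.inl (by rw [norm_perp, hη1]), o01⟩, o10, Or.inl hη1⟩
      set b := onb ![perp η, η] hv with hbdef
      have hHle : ∀ p : E2, G1 p ≤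
          ({t : ℝ | |t| ≤ R}.indicator (fun _ => (1:ℝ≥0∞)) (b.repr p 0))
            * ENNReal.ofReal (K * (1 + (b.repr p 1)^2)⁻¹) := by
        intro p
        have hb0 : b.repr p 0 = ⟪perp η, p⟫ := by
          rw [hbdef, onb_repr]; simp
        have hb1 : b.repr p 1 = ⟪η, p⟫ := by
          rw [hbdef, onb_repr]; simp
        rw [hb0, hb1]
        by_cases hp : p ∈ S
        · have habs : |⟪perp η, p⟫| ≤ R := by
            refine le_trans (abs_real_inner_le_norm _ _) ?_
            rw [norm_perp, hη1, one_mul]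
            exact hp
          rw [hG1def, Set.indicator_of_mem hp, Set.indicator_of_mem (by exact habs), one_mul]
        · rw [hG1def, Set.indicator_of_notMem hp]
          exact zero_le
      calc (∫⁻ p : E2, G1 p)
          ≤ ∫⁻ p : E2, ({t : ℝ | |t| ≤ R}.indicator (fun _ => (1:ℝ≥0∞)) (b.repr p 0))
              * ENNReal.ofReal (K * (1 + (b.repr p 1)^2)⁻¹) := lintegral_mono hHle
        _ = ∫⁻ q : E2, ({t : ℝ | |t| ≤ R}.indicator (fun _ => (1:ℝ≥0∞)) (q 0))
              * ENNReal.ofReal (K * (1 + (q 1)^2)⁻¹) :=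
            b.measurePreserving_repr.lintegral_comp_emb
              b.repr.toHomeomorph.measurableEmbedding
              (fun q => ({t : ℝ | |t| ≤ R}.indicator (fun _ => (1:ℝ≥0∞)) (q 0))
                * ENNReal.ofReal (K * (1 + (q 1)^2)⁻¹))
        _ = ENNReal.ofReal (2*R) * (ENNReal.ofReal K * ENNReal.ofReal π) := lint_strip R K hK0
    -- bound on G2 integral
    have hG2int : (∫⁻ p : E2, G2 p) ≤ ENNReal.ofReal (2 / R^3) * I := by
      calc (∫⁻ p : E2, G2 p)
          ≤ ∫⁻ p : E2, ENNReal.ofReal ((2 / R^3) * (pZero p ^ 4 * f p)) :=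
            lintegral_mono fun p => Set.indicator_le_self _ _ p
        _ = ∫⁻ p : E2, ENNReal.ofReal (2 / R^3) * ENNReal.ofReal (pZero p ^ 4 * f p) := by
            congr 1; funext p; rw [ENNReal.ofReal_mul (by positivity)]
        _ = ENNReal.ofReal (2 / R^3) * I := by
            rw [hIdef]; exact lintegral_const_mul' _ _ ENNReal.ofReal_ne_top
    -- arithmetic
    have hA : ENNReal.ofReal (2*R) * (ENNReal.ofReal K * ENNReal.ofReal π)
        ≤ ENNReal.ofReal (8 * π * C₀) * I ^ ((2:ℝ)/5) := by
      rw [← ENNReal.ofReal_mul (by positivity), ← ENNReal.ofReal_mul (by positivity)]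
      calc ENNReal.ofReal (2*R * (K * π)) ≤ ENNReal.ofReal ((8 * π * C₀) * R^2) := by
            apply ENNReal.ofReal_le_ofReal
            rw [hKdef]
            nlinarith [Real.pi_pos, hC₀, hR1, mul_pos hC₀ Real.pi_pos,
              mul_nonneg (mul_nonneg hC₀.le Real.pi_pos.le) (sub_nonneg.mpr hR1)]
        _ = ENNReal.ofReal (8 * π * C₀) * I ^ ((2:ℝ)/5) := by
            rw [ENNReal.ofReal_mul (by positivity), hofRpow 2]
            norm_num
    have hB : ENNReal.ofReal (2 / R^3) * I ≤ 2 * I ^ ((2:ℝ)/5) := by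
      have hI0 : I ≠ 0 := by
        intro h; rw [h] at hI1; exact (not_lt.mpr zero_le_one) hI1
      have h35 : I ^ ((3:ℝ)/5) ≠ 0 := by
        simp [ENNReal.rpow_eq_zero_iff, hI0, hItop]
      have h35t : I ^ ((3:ℝ)/5) ≠ ⊤ :=
        ENNReal.rpow_ne_top_of_nonneg (by norm_num) hItop
      have hsplit : I = I ^ ((3:ℝ)/5) * I ^ ((2:ℝ)/5) := by
        rw [← ENNReal.rpow_add _ _ hI0 hItop]
        norm_num
      have hco : ENNReal.ofReal (2 / R^3) = 2 * (I ^ ((3:ℝ)/5))⁻¹ := by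
        rw [div_eq_mul_inv, ENNReal.ofReal_mul (by norm_num),
          ENNReal.ofReal_inv_of_pos (by positivity), hofRpow 3, ENNReal.ofReal_ofNat]
        norm_num
      calc ENNReal.ofReal (2 / R^3) * I = 2 * (I ^ ((3:ℝ)/5))⁻¹ * (I ^ ((3:ℝ)/5) * I ^ ((2:ℝ)/5)) := by
            rw [← hsplit, hco]
        _ = 2 * ((I ^ ((3:ℝ)/5))⁻¹ * I ^ ((3:ℝ)/5)) * I ^ ((2:ℝ)/5) := by ring
        _ = 2 * I ^ ((2:ℝ)/5) := by rw [ENNReal.inv_mul_cancel h35 h35t, mul_one]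
        _ ≤ 2 * I ^ ((2:ℝ)/5) := le_rfl
    calc (∫⁻ p : E2, ENNReal.ofReal (f p / (pZero p + ⟪p, ξ⟫)))
        ≤ (∫⁻ p : E2, G1 p) + ∫⁻ p : E2, G2 p := step1
      _ ≤ ENNReal.ofReal (2*R) * (ENNReal.ofReal K * ENNReal.ofReal π)
          + ENNReal.ofReal (2 / R^3) * I := add_le_add hG1int hG2int
      _ ≤ ENNReal.ofReal (8 * π * C₀) * I ^ ((2:ℝ)/5) + 2 * I ^ ((2:ℝ)/5) := add_le_add hA hB
      _ = (ENNReal.ofReal (8 * π * C₀) + 2) * I ^ ((2:ℝ)/5) := by ring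
      _ = ↑(Real.toNNReal (8 * π * C₀ + 2)) * I ^ ((2:ℝ)/5) := by rw [hCcoe]
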